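/- Let f ∈ F_L and let X solve the ODE Ẍ + (3/t)Ẋ + ∇f(X) = 0 with X(0) = x₀, Ẋ(0) = 0. Define M(t) = sup_{u ∈ (0,t]} ‖Ẋ(u)‖/u. Then for every t with 0 < t < √(12/L), M(t) ≤ ‖∇f(x₀)‖ / (4(1 − Lt²/12)). -/

import Mathlib

open Set Filter Topology

noncomputable section

abbrev E (n : ℕ) := EuclideanSpace ℝ (Fin n)

def MemFL (n : ℕ) (L : ℝ) (f : E n → ℝ) : Prop :=
  ConvexOn ℝ Set.univ f ∧ ContDiff ℝ 1 f ∧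
    ∀ x y, ‖gradient f x - gradient f y‖ ≤ L * ‖x - y‖

def NesterovSol (n : ℕ) (f : E n → ℝ) (x0 : E n) (X : ℝ → E n) : Prop :=
  X 0 = x0 ∧
  ContDiffOn ℝ 1 X (Set.Ici 0) ∧
  ContDiffOn ℝ 2 X (Set.Ioi 0) ∧
  derivWithin X (Set.Ici 0) 0 = 0 ∧
  ∀ t > (0:ℝ), deriv (deriv X) t + (3 / t) • deriv X t + gradient f (X t) = 0

set_option maxHeartbeats 2000000 in
/-- **Lemma (bound on `M(t)`).** For the solution of the Nesterov ODE with `f ∈ F_L`, the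
quantity `M(t) = sup_{u ∈ (0,t]} ‖Ẋ(u)‖/u` satisfies
`M(t) ≤ ‖∇f(x₀)‖/(4(1 - Lt²/12))` whenever `0 < t < √(12/L)`. -/
theorem nesterov_ode_M_bound (n : ℕ) (L : ℝ) (hL : 0 < L)
    (f : E n → ℝ) (hf : MemFL n L f)
    (x0 : E n) (X : ℝ → E n) (hX : NesterovSol n f x0 X)
    (t : ℝ) (ht0 : 0 < t) (ht : t < Real.sqrt (12 / L)) :
    sSup ((fun u => ‖deriv X u‖ / u) '' Set.Ioc (0:ℝ) t) ≤
      ‖gradient f x0‖ / (4 * (1 - L * t ^ 2 / 12)) := by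
  obtain ⟨hX0, hC1, hC2, hV0, hode⟩ := hX
  set A : ℝ := ‖gradient f x0‖ with hAdef
  set V : ℝ → E n := derivWithin X (Set.Ici 0) with hVdef
  have hVcont : ContinuousOn V (Set.Ici 0) :=
    hC1.continuousOn_derivWithin (uniqueDiffOn_Ici 0) le_rfl
  have hVderiv : ∀ s : ℝ, 0 < s → V s = deriv X s := fun s hs =>
    derivWithin_of_mem_nhds (Filter.mem_of_superset (Ioi_mem_nhds hs) Ioi_subset_Ici_self)
  have hXcont : ContinuousOn X (Set.Ici 0) := hC1.continuousOn
  -- gradient is continuous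
  have glip := hf.2.2
  have gcont : Continuous (gradient f) := by
    have lip : LipschitzWith L.toNNReal (gradient f) := by
      apply LipschitzWith.of_dist_le_mul
      intro x y
      rw [dist_eq_norm, dist_eq_norm, Real.coe_toNNReal L hL.le]
      exact glip x y
    exact lip.continuous
  -- differentiability of X and deriv X on (0,∞)
  have hXdiff : ∀ s : ℝ, 0 < s → HasDerivAt X (V s) s := by
    intro s hs
    rw [hVderiv s hs]
    exact ((hC2.differentiableOn (by norm_num)).differentiableAt (Ioi_mem_nhds hs)).hasDerivAt
  have hC2' : ContDiffOn ℝ 1 (deriv X) (Set.Ioi 0) :=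
    hC2.deriv_of_isOpen isOpen_Ioi (by norm_num)
  have hXdiff2 : ∀ s : ℝ, 0 < s → HasDerivAt (deriv X) (deriv (deriv X) s) s := fun s hs =>
    ((hC2'.differentiableOn one_ne_zero).differentiableAt (Ioi_mem_nhds hs)).hasDerivAt
  -- FTC for X
  have hXint : ∀ s : ℝ, 0 ≤ s → X s - x0 = ∫ r in (0:ℝ)..s, V r := by
    intro s hs
    have hsub : Set.Icc (0:ℝ) s ⊆ Set.Ici 0 := fun x hx => hx.1
    have := intervalIntegral.integral_eq_sub_of_hasDeriv_right_of_le hs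
      (hXcont.mono hsub)
      (fun x hx => (hXdiff x hx.1).hasDerivWithinAt)
      ((hVcont.mono (by rw [uIcc_of_le hs]; exact hsub)).intervalIntegrable)
    rw [this, hX0]
  -- FTC for Y s = s^3 • V s
  have hYint : ∀ u : ℝ, 0 < u → u ^ 3 • V u = ∫ s in (0:ℝ)..u, (-(s ^ 3)) • gradient f (X s) := by
    intro u hu
    have hsub : Set.Icc (0:ℝ) u ⊆ Set.Ici 0 := fun x hx => hx.1
    have hYcont : ContinuousOn (fun s : ℝ => s ^ 3 • V s) (Set.Icc 0 u) :=
      (continuous_pow 3).continuousOn.smul (hVcont.mono hsub)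
    have hint : IntervalIntegrable (fun s : ℝ => (-(s ^ 3)) • gradient f (X s))
        MeasureTheory.volume 0 u := by
      apply ContinuousOn.intervalIntegrable
      exact ((continuous_pow 3).neg.continuousOn).smul
        (gcont.comp_continuousOn (hXcont.mono (by rw [uIcc_of_le hu.le]; exact hsub)))
    have hYder : ∀ x ∈ Set.Ioo (0:ℝ) u,
        HasDerivWithinAt (fun s : ℝ => s ^ 3 • V s) ((-(x ^ 3)) • gradient f (X x))
          (Set.Ioi x) x := by
      intro x hx
      have hx0 := hx.1
      have h1 : HasDerivAt (fun s : ℝ => s ^ 3 • deriv X s)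
          (x ^ 3 • deriv (deriv X) x + (((3:ℕ):ℝ) * x ^ 2) • deriv X x) x :=
        (hasDerivAt_pow 3 x).smul (hXdiff2 x hx0)
      have heq : (fun s : ℝ => s ^ 3 • V s) =ᶠ[nhds x] (fun s : ℝ => s ^ 3 • deriv X s) :=
        Filter.eventually_of_mem (Ioi_mem_nhds hx0)
          (fun r hr => by show r ^ 3 • V r = r ^ 3 • deriv X r; rw [hVderiv r hr])
      have h2 := h1.congr_of_eventuallyEq heq
      have hode' := hode x hx0
      rw [add_assoc] at hode'
      have hdd : deriv (deriv X) x = -((3 / x) • deriv X x + gradient f (X x)) :=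
        eq_neg_of_add_eq_zero_left hode'
      have hval : x ^ 3 • deriv (deriv X) x + (((3:ℕ):ℝ) * x ^ 2) • deriv X x
          = (-(x ^ 3)) • gradient f (X x) := by
        rw [hdd]
        match_scalars <;> (field_simp; try ring)
      rw [hval] at h2
      exact h2.hasDerivWithinAt
    have := intervalIntegral.integral_eq_sub_of_hasDeriv_right_of_le hu.le hYcont hYder hint
    rw [this]
    simp [hV0]
  -- basic integral bound
  have hintbound : ∀ u : ℝ, 0 < u →
      u ^ 3 * ‖V u‖ ≤ ∫ s in (0:ℝ)..u, s ^ 3 * ‖gradient f (X s)‖ := by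
    intro u hu
    have h1 : u ^ 3 * ‖V u‖ = ‖u ^ 3 • V u‖ := by
      rw [norm_smul, Real.norm_eq_abs, abs_of_nonneg (pow_nonneg hu.le 3)]
    rw [h1, hYint u hu]
    calc ‖∫ s in (0:ℝ)..u, (-(s ^ 3)) • gradient f (X s)‖
        ≤ ∫ s in (0:ℝ)..u, ‖(-(s ^ 3)) • gradient f (X s)‖ :=
          intervalIntegral.norm_integral_le_integral_norm hu.le
      _ = ∫ s in (0:ℝ)..u, s ^ 3 * ‖gradient f (X s)‖ := by
          apply intervalIntegral.integral_congr
          intro s hs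
          rw [uIcc_of_le hu.le] at hs
          show ‖(-(s ^ 3)) • gradient f (X s)‖ = s ^ 3 * ‖gradient f (X s)‖
          rw [norm_smul, Real.norm_eq_abs, abs_neg, abs_of_nonneg (pow_nonneg hs.1 3)]
  -- integrability of the norm integrand on any [0,u], u ≤ t
  have hnormint : ∀ u : ℝ, 0 < u → IntervalIntegrable
      (fun s : ℝ => s ^ 3 * ‖gradient f (X s)‖) MeasureTheory.volume 0 u := by
    intro u hu
    apply ContinuousOn.intervalIntegrable
    apply ((continuous_pow 3).continuousOn).mul
    apply ContinuousOn.norm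
    exact gcont.comp_continuousOn (hXcont.mono (by rw [uIcc_of_le hu.le]; exact fun x hx => hx.1))
  -- crude bound giving BddAbove
  obtain ⟨G, hG⟩ := (isCompact_Icc (a := (0:ℝ)) (b := t)).exists_bound_of_continuousOn
    (gcont.comp_continuousOn (hXcont.mono (fun x hx => hx.1)) |>.norm)
  have hGnn : 0 ≤ G := le_trans (norm_nonneg _) (by
    simpa using hG 0 ⟨le_rfl, ht0.le⟩)
  have hcrude : ∀ u ∈ Set.Ioc (0:ℝ) t, ‖V u‖ / u ≤ G / 4 := by
    intro u hu
    have h1 := hintbound u hu.1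
    have h2 : (∫ s in (0:ℝ)..u, s ^ 3 * ‖gradient f (X s)‖) ≤ ∫ s in (0:ℝ)..u, G * s ^ 3 := by
      apply intervalIntegral.integral_mono_on hu.1.le (hnormint u hu.1)
        ((continuous_const.mul (continuous_pow 3)).intervalIntegrable 0 u)
      intro s hs
      have hsle : ‖gradient f (X s)‖ ≤ G := by
        simpa using hG s ⟨hs.1, le_trans hs.2 hu.2⟩
      calc s ^ 3 * ‖gradient f (X s)‖ ≤ s ^ 3 * G := by
            exact mul_le_mul_of_nonneg_left hsle (pow_nonneg hs.1 3)
        _ = G * s ^ 3 := by ring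
    have h3 : (∫ s in (0:ℝ)..u, G * s ^ 3) = G * (u ^ 4 / 4) := by
      rw [intervalIntegral.integral_const_mul, integral_pow]
      norm_num
    have h4 : u ^ 3 * ‖V u‖ ≤ G * (u ^ 4 / 4) := by linarith
    rw [div_le_div_iff₀ hu.1 (by norm_num : (0:ℝ) < 4)]
    nlinarith [pow_pos hu.1 3, norm_nonneg (V u)]
  have hbdd : BddAbove ((fun u => ‖deriv X u‖ / u) '' Set.Ioc (0:ℝ) t) := by
    refine ⟨G / 4, ?_⟩
    rintro _ ⟨u, hu, rfl⟩
    show ‖deriv X u‖ / u ≤ G / 4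
    rw [← hVderiv u hu.1]
    exact hcrude u hu
  set M : ℝ := sSup ((fun u => ‖deriv X u‖ / u) '' Set.Ioc (0:ℝ) t) with hMdef
  have hmem : (fun u => ‖deriv X u‖ / u) t ∈ ((fun u => ‖deriv X u‖ / u) '' Set.Ioc (0:ℝ) t) :=
    ⟨t, ⟨ht0, le_rfl⟩, rfl⟩
  have hMnn : 0 ≤ M := le_trans (by positivity) (le_csSup hbdd hmem)
  have hMub : ∀ r ∈ Set.Ioc (0:ℝ) t, ‖V r‖ ≤ M * r := by
    intro r hr
    have h1 : ‖deriv X r‖ / r ≤ M := le_csSup hbdd ⟨r, hr, rfl⟩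
    rw [hVderiv r hr.1]
    exact (div_le_iff₀ hr.1).mp h1
  -- distance bound
  have hdist : ∀ s ∈ Set.Icc (0:ℝ) t, ‖X s - x0‖ ≤ M * s ^ 2 / 2 := by
    intro s hs
    rw [hXint s hs.1]
    have hVint : IntervalIntegrable V MeasureTheory.volume 0 s :=
      (hVcont.mono (by rw [uIcc_of_le hs.1]; exact fun x hx => hx.1)).intervalIntegrable
    calc ‖∫ r in (0:ℝ)..s, V r‖ ≤ ∫ r in (0:ℝ)..s, ‖V r‖ :=
          intervalIntegral.norm_integral_le_integral_norm hs.1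
      _ ≤ ∫ r in (0:ℝ)..s, M * r := by
          apply intervalIntegral.integral_mono_on hs.1 hVint.norm
            ((continuous_const.mul continuous_id).intervalIntegrable 0 s)
          intro r hr
          rcases eq_or_lt_of_le hr.1 with h | h
          · simp [← h, show V 0 = 0 from hV0]
          · exact hMub r ⟨h, le_trans hr.2 hs.2⟩
      _ = M * s ^ 2 / 2 := by
          rw [intervalIntegral.integral_const_mul, integral_id]
          ring
  -- main pointwise bound
  have hmain : ∀ u ∈ Set.Ioc (0:ℝ) t, ‖V u‖ / u ≤ A / 4 + L * t ^ 2 / 12 * M := by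
    intro u hu
    have h1 := hintbound u hu.1
    have h2 : (∫ s in (0:ℝ)..u, s ^ 3 * ‖gradient f (X s)‖)
        ≤ ∫ s in (0:ℝ)..u, (A * s ^ 3 + (L * M / 2) * s ^ 5) := by
      apply intervalIntegral.integral_mono_on hu.1.le (hnormint u hu.1)
      · exact ((continuous_const.mul (continuous_pow 3)).add
          (continuous_const.mul (continuous_pow 5))).intervalIntegrable 0 u
      intro s hs
      have hst : s ∈ Set.Icc (0:ℝ) t := ⟨hs.1, le_trans hs.2 hu.2⟩
      have hgb : ‖gradient f (X s)‖ ≤ A + L * (M * s ^ 2 / 2) := by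
        have h3 := glip (X s) x0
        have h4 := norm_sub_norm_le (gradient f (X s)) (gradient f x0)
        have h5 := hdist s hst
        nlinarith [norm_nonneg (X s - x0)]
      have hs3 : (0:ℝ) ≤ s ^ 3 := pow_nonneg hs.1 3
      nlinarith [mul_le_mul_of_nonneg_left hgb hs3]
    have h3 : (∫ s in (0:ℝ)..u, (A * s ^ 3 + (L * M / 2) * s ^ 5))
        = A * (u ^ 4 / 4) + (L * M / 2) * (u ^ 6 / 6) := by
      rw [intervalIntegral.integral_add (f := fun s : ℝ => A * s ^ 3)
        (g := fun s : ℝ => (L * M / 2) * s ^ 5)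
        ((continuous_const.mul (continuous_pow 3)).intervalIntegrable 0 u)
        ((continuous_const.mul (continuous_pow 5)).intervalIntegrable 0 u),
        intervalIntegral.integral_const_mul, intervalIntegral.integral_const_mul,
        integral_pow, integral_pow]
      norm_num
    have h4 : u ^ 3 * ‖V u‖ ≤ A * (u ^ 4 / 4) + (L * M / 2) * (u ^ 6 / 6) := by linarith
    have hu2 : u ^ 2 ≤ t ^ 2 := by nlinarith [hu.1.le, hu.2]
    have hLM : 0 ≤ L * M := mul_nonneg hL.le hMnn
    have key : L * M * (u ^ 2 * u ^ 4) ≤ L * M * (t ^ 2 * u ^ 4) :=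
      mul_le_mul_of_nonneg_left (mul_le_mul_of_nonneg_right hu2 (pow_nonneg hu.1.le 4)) hLM
    have h5 : ‖V u‖ * u ^ 3 ≤ ((A / 4 + L * t ^ 2 / 12 * M) * u) * u ^ 3 := by
      nlinarith [h4, key]
    rw [div_le_iff₀ hu.1]
    exact le_of_mul_le_mul_right h5 (pow_pos hu.1 3)
  -- conclude
  have ht2 : t ^ 2 < 12 / L := (Real.lt_sqrt ht0.le).mp ht
  have hk : L * t ^ 2 / 12 < 1 := by
    rw [div_lt_one (by norm_num : (0:ℝ) < 12)]
    have := (lt_div_iff₀ hL).mp ht2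
    linarith
  have hdenom : (0:ℝ) < 4 * (1 - L * t ^ 2 / 12) := by linarith
  have hM : M ≤ A / 4 + L * t ^ 2 / 12 * M := by
    apply Real.sSup_le
    · rintro _ ⟨u, hu, rfl⟩
      show ‖deriv X u‖ / u ≤ A / 4 + L * t ^ 2 / 12 * M
      rw [← hVderiv u hu.1]
      exact hmain u hu
    · have h1 : (0:ℝ) ≤ A := hAdef ▸ norm_nonneg _
      have h2 : (0:ℝ) ≤ L * t ^ 2 / 12 * M :=
        mul_nonneg (by positivity) hMnn
      linarith
  rw [le_div_iff₀ hdenom]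
  nlinarith [hM]
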